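/- Let α, β, τ > 0, let N ≥ 1 be an integer, and set T = Nτ. Let u : [0,T] → ℝ be continuous and affine on each interval [kτ, (k+1)τ], and let v be its upwinded interpolant. Then ∫₀ᵀ |v̇|² = Φ(p) ∫₀ᵀ |u̇|², where p = βτ/α is the Péclet number and Φ(p) = ((exp(p) + 1)/(exp(p) − 1)) · (p/2). -/

import Mathlib

open MeasureTheory

/-- `u` is affine on each interval `[kτ, (k+1)τ]`, `0 ≤ k < N`. -/
def PWAffine (τ : ℝ) (N : ℕ) (u : ℝ → ℝ) : Prop :=
  ∀ k : ℕ, k < N → ∃ c₁ c₂ : ℝ,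
    ∀ t ∈ Set.Icc ((k : ℝ) * τ) (((k : ℝ) + 1) * τ), u t = c₁ + c₂ * t

/-- `v` is of the upwinded form `c₁ + c₂ exp(−βt/α)` on each interval
`[kτ, (k+1)τ]`, `0 ≤ k < N`. -/
def Upwind (α β τ : ℝ) (N : ℕ) (v : ℝ → ℝ) : Prop :=
  ∀ k : ℕ, k < N → ∃ c₁ c₂ : ℝ,
    ∀ t ∈ Set.Icc ((k : ℝ) * τ) (((k : ℝ) + 1) * τ),
      v t = c₁ + c₂ * Real.exp (-(β * t) / α)

/-- `Φ(p) = ((e^p + 1)/(e^p − 1)) · (p/2)`. -/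
noncomputable def Phi (p : ℝ) : ℝ :=
  ((Real.exp p + 1) / (Real.exp p - 1)) * (p / 2)

/-- **Exact energy ratio between a piecewise affine function and its upwinded
interpolant:** for `α, β, τ > 0`, `N ≥ 1`, `T = Nτ`, a continuous `τ`-piecewise affine
`u` and its upwinded interpolant `v` (with piecewise derivatives `u'`, `v'`),
`∫₀ᵀ |v̇|² = Φ(p) ∫₀ᵀ |u̇|²` where `p = βτ/α` is the Péclet number. -/
theorem upwind_interpolant_energy_ratio :
    ∀ α β τ : ℝ, 0 < α → 0 < β → 0 < τ → ∀ N : ℕ, 1 ≤ N →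
      ∀ u u' v v' : ℝ → ℝ,
        PWAffine τ N u →
        ContinuousOn v (Set.Icc 0 ((N : ℝ) * τ)) →
        (∀ k : ℕ, k ≤ N → v ((k : ℝ) * τ) = u ((k : ℝ) * τ)) →
        Upwind α β τ N v →
        (∀ k : ℕ, k < N → ∀ t ∈ Set.Ioo ((k : ℝ) * τ) (((k : ℝ) + 1) * τ),
          HasDerivAt u (u' t) t) →
        (∀ k : ℕ, k < N → ∀ t ∈ Set.Ioo ((k : ℝ) * τ) (((k : ℝ) + 1) * τ),
          HasDerivAt v (v' t) t) →
        (∫ t in (0 : ℝ)..((N : ℝ) * τ), (v' t) ^ 2)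
          = Phi (β * τ / α) * ∫ t in (0 : ℝ)..((N : ℝ) * τ), (u' t) ^ 2 := by
  intro α β τ hα hβ hτ N hN u u' v v' hu hvcont hvu hvup hu' hv'
  set p : ℝ := β * τ / α with hp
  have key : ∀ k : ℕ, k < N →
      IntervalIntegrable (fun t => (v' t)^2) volume ((k:ℝ)*τ) (((k:ℝ)+1)*τ) ∧
      IntervalIntegrable (fun t => (u' t)^2) volume ((k:ℝ)*τ) (((k:ℝ)+1)*τ) ∧
      (∫ t in ((k:ℝ)*τ)..(((k:ℝ)+1)*τ), (v' t)^2)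
        = Phi p * ∫ t in ((k:ℝ)*τ)..(((k:ℝ)+1)*τ), (u' t)^2 := by
    intro k hk
    obtain ⟨a₁, a₂, huaff⟩ := hu k hk
    obtain ⟨c₁, c₂, hvform⟩ := hvup k hk
    set s : ℝ := (k:ℝ)*τ with hs
    set b : ℝ := ((k:ℝ)+1)*τ with hb
    have hsb : s < b := by
      rw [hs, hb]; nlinarith
    -- explicit formula for v' on the open interval
    have hgv : ∀ t ∈ Set.Ioo s b, v' t = c₂ * Real.exp (-(β*t)/α) * (-(β/α)) := by
      intro t ht
      have hl : HasDerivAt (fun t : ℝ => -(β*t)/α) (-(β/α)) t := by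
        have h0 : (fun t : ℝ => -(β*t)/α) = fun t : ℝ => (-(β/α)) * t := by
          funext x; ring
        rw [h0]
        simpa using (hasDerivAt_id t).const_mul (-(β/α))
      have h2 : HasDerivAt (fun t => c₁ + c₂ * Real.exp (-(β*t)/α))
          (c₂ * (Real.exp (-(β*t)/α) * (-(β/α)))) t :=
        ((hl.exp).const_mul c₂).const_add c₁
      have h3 : HasDerivAt v (c₂ * (Real.exp (-(β*t)/α) * (-(β/α)))) t := by
        apply h2.congr_of_eventuallyEq
        filter_upwards [Ioo_mem_nhds ht.1 ht.2] with x hx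
        exact hvform x (Set.Ioo_subset_Icc_self hx)
      have := (hv' k hk t ht).unique h3
      rw [this]; ring
    -- explicit formula for u' on the open interval
    have hgu : ∀ t ∈ Set.Ioo s b, u' t = a₂ := by
      intro t ht
      have h2 : HasDerivAt (fun t : ℝ => a₁ + a₂ * t) a₂ t := by
        simpa using ((hasDerivAt_id t).const_mul a₂).const_add a₁
      have h3 : HasDerivAt u a₂ t := by
        apply h2.congr_of_eventuallyEq
        filter_upwards [Ioo_mem_nhds ht.1 ht.2] with x hx
        exact huaff x (Set.Ioo_subset_Icc_self hx)
      exact (hu' k hk t ht).unique h3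
    -- a.e. on the interval, t is in the open interval
    have hne : ∀ᵐ t : ℝ, t ≠ b := by
      have : (volume : Measure ℝ) {b} = 0 := Real.volume_singleton
      rw [ae_iff]; simpa using this
    have haev : ∀ᵐ x : ℝ, x ∈ Set.uIoc s b →
        (v' x)^2 = (c₂ * Real.exp (-(β*x)/α) * (-(β/α)))^2 := by
      filter_upwards [hne] with t htb ht
      rw [Set.uIoc_of_le hsb.le] at ht
      rw [hgv t ⟨ht.1, lt_of_le_of_ne ht.2 htb⟩]
    have haeu : ∀ᵐ x : ℝ, x ∈ Set.uIoc s b → (u' x)^2 = a₂^2 := by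
      filter_upwards [hne] with t htb ht
      rw [Set.uIoc_of_le hsb.le] at ht
      rw [hgu t ⟨ht.1, lt_of_le_of_ne ht.2 htb⟩]
    have hcontg : Continuous (fun t : ℝ => (c₂ * Real.exp (-(β*t)/α) * (-(β/α)))^2) := by
      fun_prop
    have hintg : IntervalIntegrable (fun t : ℝ => (c₂ * Real.exp (-(β*t)/α) * (-(β/α)))^2)
        volume s b := hcontg.intervalIntegrable s b
    have hintc : IntervalIntegrable (fun _ : ℝ => a₂^2) volume s b :=
      intervalIntegrable_const
    have hvint : IntervalIntegrable (fun t => (v' t)^2) volume s b := by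
      refine hintg.congr_ae ?_
      apply (ae_restrict_iff' measurableSet_uIoc).mpr
      filter_upwards [haev] with t ht hts
      exact (ht hts).symm
    have huint : IntervalIntegrable (fun t => (u' t)^2) volume s b := by
      refine hintc.congr_ae ?_
      apply (ae_restrict_iff' measurableSet_uIoc).mpr
      filter_upwards [haeu] with t ht hts
      exact (ht hts).symm
    refine ⟨hvint, huint, ?_⟩
    -- compute the two integrals
    have hIv : (∫ t in s..b, (v' t)^2)
        = ∫ t in s..b, (c₂ * Real.exp (-(β*t)/α) * (-(β/α)))^2 :=
      intervalIntegral.integral_congr_ae haev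
    have hIu : (∫ t in s..b, (u' t)^2) = ∫ t in s..b, (a₂^2 : ℝ) :=
      intervalIntegral.integral_congr_ae haeu
    have hIu' : (∫ t in s..b, (u' t)^2) = a₂^2 * τ := by
      rw [hIu, intervalIntegral.integral_const, smul_eq_mul]
      rw [hs, hb]; ring
    -- FTC for the explicit integral
    set K : ℝ := (c₂*(β/α))^2 * (α/(-(2*β))) with hK
    have hFTC : (∫ t in s..b, (c₂ * Real.exp (-(β*t)/α) * (-(β/α)))^2)
        = K * Real.exp ((-(2*β)/α) * b) - K * Real.exp ((-(2*β)/α) * s) := by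
      have hderiv : ∀ t ∈ Set.uIcc s b,
          HasDerivAt (fun t => K * Real.exp ((-(2*β)/α) * t))
            ((c₂ * Real.exp (-(β*t)/α) * (-(β/α)))^2) t := by
        intro t _
        have hl : HasDerivAt (fun t : ℝ => (-(2*β)/α) * t) (-(2*β)/α) t := by
          simpa using (hasDerivAt_id t).const_mul (-(2*β)/α)
        have := (hl.exp).const_mul K
        refine this.congr_deriv ?_
        have hexp : Real.exp ((-(2*β)/α) * t) = Real.exp (-(β*t)/α) * Real.exp (-(β*t)/α) := by
          rw [← Real.exp_add]; ring_nf
        rw [hK, hexp]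
        field_simp
      rw [intervalIntegral.integral_eq_sub_of_hasDerivAt hderiv hintg]
    -- endpoint matching
    have hvs : v s = c₁ + c₂ * Real.exp (-(β*s)/α) :=
      hvform s ⟨le_refl s, hsb.le⟩
    have hvb : v b = c₁ + c₂ * Real.exp (-(β*b)/α) :=
      hvform b ⟨hsb.le, le_refl b⟩
    have hus : u s = a₁ + a₂ * s := huaff s ⟨le_refl s, hsb.le⟩
    have hub : u b = a₁ + a₂ * b := huaff b ⟨hsb.le, le_refl b⟩
    have hvus : v s = u s := hvu k hk.le
    have hvub : v b = u b := by
      have := hvu (k+1) hk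
      have hcast : ((k+1 : ℕ) : ℝ) * τ = b := by push_cast; rw [hb]
      rwa [hcast] at this
    have rel : c₂ * Real.exp (-(β*b)/α) - c₂ * Real.exp (-(β*s)/α) = a₂ * τ := by
      have e1 : c₁ + c₂ * Real.exp (-(β*s)/α) = a₁ + a₂ * s := by
        rw [← hvs, ← hus]; exact hvus
      have e2 : c₁ + c₂ * Real.exp (-(β*b)/α) = a₁ + a₂ * b := by
        rw [← hvb, ← hub]; exact hvub
      have : (c₁ + c₂ * Real.exp (-(β*b)/α)) - (c₁ + c₂ * Real.exp (-(β*s)/α))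
          = (a₁ + a₂ * b) - (a₁ + a₂ * s) := by rw [e1, e2]
      have h4 : a₁ + a₂ * b - (a₁ + a₂ * s) = a₂ * τ := by rw [hs, hb]; ring
      linarith [this, h4]
    -- algebra
    set E : ℝ := Real.exp (-(β*s)/α) with hE
    set P : ℝ := Real.exp p with hP
    have hP1 : 1 < P := by
      rw [hP]; rw [show (1:ℝ) = Real.exp 0 from (Real.exp_zero).symm]
      apply Real.exp_lt_exp.mpr
      rw [hp]; positivity
    have hP0 : P ≠ 0 := by positivity
    have hEb : Real.exp (-(β*b)/α) = E * P⁻¹ := by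
      rw [hE, hP, ← Real.exp_neg, ← Real.exp_add]
      congr 1
      rw [hp, hb, hs]
      field_simp
      ring
    have hE2s : Real.exp ((-(2*β)/α) * s) = E^2 := by
      rw [hE, sq, ← Real.exp_add]; congr 1; ring
    have hE2b : Real.exp ((-(2*β)/α) * b) = (E * P⁻¹)^2 := by
      rw [← hEb, sq, ← Real.exp_add]; congr 1; ring
    have ha2 : a₂ = c₂ * (E * P⁻¹ - E) / τ := by
      rw [hEb] at rel
      rw [eq_div_iff hτ.ne']
      linear_combination -rel
    rw [hIv, hFTC, hIu', hE2s, hE2b, ha2, Phi, ← hP, hK, hp]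
    have hP1' : P - 1 ≠ 0 := by linarith
    field_simp
    ring
  -- sum over intervals
  have hvint : ∀ k < N, IntervalIntegrable (fun t => (v' t)^2) volume
      ((fun k : ℕ => (k:ℝ)*τ) k) ((fun k : ℕ => (k:ℝ)*τ) (k+1)) := by
    intro k hk
    have := (key k hk).1
    simpa [push_cast] using (by push_cast; exact this :
      IntervalIntegrable (fun t => (v' t)^2) volume ((k:ℝ)*τ) (((k:ℝ)+1)*τ))
  have huint : ∀ k < N, IntervalIntegrable (fun t => (u' t)^2) volume
      ((fun k : ℕ => (k:ℝ)*τ) k) ((fun k : ℕ => (k:ℝ)*τ) (k+1)) := by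
    intro k hk
    have := (key k hk).2.1
    simpa [push_cast] using (by push_cast; exact this :
      IntervalIntegrable (fun t => (u' t)^2) volume ((k:ℝ)*τ) (((k:ℝ)+1)*τ))
  have hsumv := intervalIntegral.sum_integral_adjacent_intervals
    (f := fun t => (v' t)^2) (μ := volume) (a := fun k : ℕ => (k:ℝ)*τ) (n := N) hvint
  have hsumu := intervalIntegral.sum_integral_adjacent_intervals
    (f := fun t => (u' t)^2) (μ := volume) (a := fun k : ℕ => (k:ℝ)*τ) (n := N) huint
  simp only [Nat.cast_zero, zero_mul] at hsumv hsumu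
  rw [← hsumv, ← hsumu, Finset.mul_sum]
  apply Finset.sum_congr rfl
  intro k hk
  have hk' : k < N := Finset.mem_range.mp hk
  have := (key k hk').2.2
  push_cast
  convert this using 2 <;> push_cast <;> ring
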